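/- arXiv:2109.01748 — 3 statements merged into one kernel-verified Lean document; each statement's English description precedes it below -/
import Mathlib

section
/- Let Z₁,…,Z_m be i.i.d. with law μ on Ω, let ν ≪ μ with κ(ν‖μ) ≤ K, and define the reweighted random measure ν'_m = (1/m)∑_{i=1}^m (dν/dμ)(Z_i) δ_{Z_i}. Let F be a finite family of measurable functions from Ω to [−1,1]. If m ≥ δ^{−2} K |F| / γ, then with probability at least 1 − γ, max_{f∈F} |∫ f dν'_m − ∫ f dν| ≤ δ. -/
open MeasureTheory ProbabilityTheory Finset

/-- Uniform deviation of linear statistics of the reweighted empirical measure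
ν'_m = (1/m)∑ (dν/dμ)(Z_i) δ_{Z_i}: if m ≥ δ⁻² K|F|/γ and κ(ν‖μ) ≤ K, then with
probability at least 1 − γ all linear statistics of ν'_m are within δ of those of ν. -/
theorem reweighted_uniform_deviation
    {Ω : Type*} [MeasurableSpace Ω]
    (μ ν : Measure Ω) [IsProbabilityMeasure μ] [IsProbabilityMeasure ν]
    (hac : ν ≪ μ) (K : ℝ)
    (hκint : Integrable (fun x => ((ν.rnDeriv μ x).toReal) ^ 2) μ)
    (hκ : ∫ x, ((ν.rnDeriv μ x).toReal) ^ 2 ∂μ ≤ K)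
    {Θ : Type*} [MeasurableSpace Θ] (P : Measure Θ) [IsProbabilityMeasure P]
    (m : ℕ) (Z : Fin m → Θ → Ω) (hZmeas : ∀ i, Measurable (Z i))
    (hZlaw : ∀ i, Measure.map (Z i) P = μ)
    (hZindep : iIndepFun Z P)
    (F : Finset (Ω → ℝ)) (hFne : F.Nonempty)
    (hFmeas : ∀ f ∈ F, Measurable f) (hFbdd : ∀ f ∈ F, ∀ x, |f x| ≤ 1)
    (δ γ : ℝ) (hδ : δ ∈ Set.Ioo (0 : ℝ) 1) (hγ : γ ∈ Set.Ioo (0 : ℝ) 1)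
    (hm : (δ ^ 2)⁻¹ * K * (F.card : ℝ) / γ ≤ (m : ℝ)) :
    1 - γ ≤ (P {θ | ∀ f ∈ F,
        |(m : ℝ)⁻¹ * ∑ i, (ν.rnDeriv μ (Z i θ)).toReal * f (Z i θ) -
          ∫ x, f x ∂ν| ≤ δ}).toReal := by
  classical
  obtain ⟨hδ0, hδ1⟩ := hδ
  obtain ⟨hγ0, hγ1⟩ := hγ
  set d : Ω → ℝ := fun x => (ν.rnDeriv μ x).toReal with hd
  have hdmeas : Measurable d := (Measure.measurable_rnDeriv ν μ).ennreal_toReal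
  have hdnn : ∀ x, 0 ≤ d x := fun x => ENNReal.toReal_nonneg
  have hdmem : MemLp d 2 μ :=
    (memLp_two_iff_integrable_sq hdmeas.aestronglyMeasurable).mpr hκint
  have hdmean : ∫ x, d x ∂μ = 1 := by
    rw [hd, Measure.integral_toReal_rnDeriv hac]
    simp
  have hK1 : (1 : ℝ) ≤ K := by
    have hv := variance_nonneg d μ
    rw [variance_eq_sub hdmem] at hv
    simp only [Pi.pow_apply] at hv
    have h2 : ∫ x, d x ^ 2 ∂μ ≤ K := hκ
    rw [hdmean] at hv
    nlinarith
  have hK0 : (0 : ℝ) < K := by linarith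
  have hF1 : (1 : ℝ) ≤ (F.card : ℝ) := by
    exact_mod_cast Nat.one_le_iff_ne_zero.mpr (Finset.card_ne_zero_of_mem hFne.choose_spec)
  have hm0 : (0 : ℝ) < (m : ℝ) := by
    have : (0 : ℝ) < (δ ^ 2)⁻¹ * K * (F.card : ℝ) / γ := by positivity
    linarith
  -- per-function deviation bound
  have key : ∀ f ∈ F, P {θ | δ < |(m : ℝ)⁻¹ * ∑ i, d (Z i θ) * f (Z i θ) -
      ∫ x, f x ∂ν|} ≤ ENNReal.ofReal (K / ((m : ℝ) * δ ^ 2)) := by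
    intro f hf
    set g : Ω → ℝ := fun x => d x * f x with hg
    have hgmeas : Measurable g := hdmeas.mul (hFmeas f hf)
    have hgsq_le : ∀ x, g x ^ 2 ≤ d x ^ 2 := by
      intro x
      have hfx := hFbdd f hf x
      have : |g x| ≤ |d x| := by
        rw [hg]
        simp only [abs_mul]
        calc |d x| * |f x| ≤ |d x| * 1 := by
              exact mul_le_mul_of_nonneg_left hfx (abs_nonneg _)
          _ = |d x| := mul_one _
      calc g x ^ 2 = |g x| ^ 2 := (sq_abs _).symm
        _ ≤ |d x| ^ 2 := by nlinarith [abs_nonneg (g x)]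
        _ = d x ^ 2 := sq_abs _
    have hgsqint : Integrable (fun x => g x ^ 2) μ := by
      refine hκint.mono ((hgmeas.pow_const 2).aestronglyMeasurable) ?_
      filter_upwards with x
      rw [Real.norm_eq_abs, Real.norm_eq_abs, abs_of_nonneg (sq_nonneg _),
        abs_of_nonneg (sq_nonneg _)]
      exact hgsq_le x
    have hgmem : MemLp g 2 μ :=
      (memLp_two_iff_integrable_sq hgmeas.aestronglyMeasurable).mpr hgsqint
    have hgmean : ∫ x, g x ∂μ = ∫ x, f x ∂ν := by
      rw [hg]
      simp only [hd]
      simp_rw [← smul_eq_mul]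
      exact integral_rnDeriv_smul hac
    have hgvar : variance g μ ≤ K := by
      rw [variance_eq_sub hgmem]
      simp only [Pi.pow_apply]
      have h1 : ∫ x, g x ^ 2 ∂μ ≤ ∫ x, d x ^ 2 ∂μ :=
        integral_mono hgsqint hκint hgsq_le
      nlinarith [sq_nonneg (∫ x, g x ∂μ)]
    -- lift to Θ
    set X : Fin m → Θ → ℝ := fun i θ => g (Z i θ) with hX
    have hXmem : ∀ i, MemLp (X i) 2 P := by
      intro i
      have := hgmem
      rw [← hZlaw i] at this
      exact (memLp_map_measure_iff hgmeas.aestronglyMeasurable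
        (hZmeas i).aemeasurable).mp this
    have hXmean : ∀ i, ∫ θ, X i θ ∂P = ∫ x, f x ∂ν := by
      intro i
      rw [hX]
      have : ∫ θ, g (Z i θ) ∂P = ∫ x, g x ∂(Measure.map (Z i) P) :=
        (integral_map (hZmeas i).aemeasurable hgmeas.aestronglyMeasurable).symm
      rw [this, hZlaw i, hgmean]
    have hXvar : ∀ i, variance (X i) P ≤ K := by
      intro i
      have hvd : variance (X i) P = variance g μ := by
        rw [variance_eq_sub (hXmem i), variance_eq_sub hgmem]
        simp only [Pi.pow_apply]
        have h1 : ∫ θ, X i θ ^ 2 ∂P = ∫ x, g x ^ 2 ∂μ := by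
          rw [← hZlaw i, integral_map (hZmeas i).aemeasurable
            ((hgmeas.pow_const 2).aestronglyMeasurable)]
        have h2 : ∫ θ, X i θ ∂P = ∫ x, g x ∂μ := by
          rw [← hZlaw i, integral_map (hZmeas i).aemeasurable hgmeas.aestronglyMeasurable]
        rw [h1, h2]
      rw [hvd]; exact hgvar
    -- sum
    set S : Θ → ℝ := ∑ i, X i with hS
    have hSmem : MemLp S 2 P := memLp_finset_sum' _ (fun i _ => hXmem i)
    have hSapp : ∀ θ, S θ = ∑ i, g (Z i θ) := by
      intro θ; rw [hS]; simp [hX]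
    have hSmean : ∫ θ, S θ ∂P = (m : ℝ) * ∫ x, f x ∂ν := by
      rw [hS]
      have : ∫ θ, (∑ i, X i) θ ∂P = ∑ i, ∫ θ, X i θ ∂P := by
        simp only [Finset.sum_apply]
        exact integral_finset_sum _ (fun i _ => (hXmem i).integrable one_le_two)
      rw [this]
      simp [hXmean, Finset.card_univ]
    have hSvar : variance S P ≤ (m : ℝ) * K := by
      rw [hS, IndepFun.variance_sum (fun i _ => hXmem i)
        (fun i _ j _ hij => ((hZindep.indepFun hij).comp hgmeas hgmeas))]
      calc ∑ i, variance (X i) P ≤ ∑ _i : Fin m, K := Finset.sum_le_sum (fun i _ => hXvar i)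
        _ = (m : ℝ) * K := by simp [Finset.card_univ, mul_comm]
    have hc : (0 : ℝ) < (m : ℝ) * δ := by positivity
    have cheb := meas_ge_le_variance_div_sq (μ := P) hSmem hc
    have hsub : {θ | δ < |(m : ℝ)⁻¹ * ∑ i, d (Z i θ) * f (Z i θ) - ∫ x, f x ∂ν|}
        ⊆ {θ | (m : ℝ) * δ ≤ |S θ - P[S]|} := by
      intro θ hθ
      simp only [Set.mem_setOf_eq] at hθ ⊢
      have hSθ : S θ = ∑ i, d (Z i θ) * f (Z i θ) := hSapp θ
      have hPS : P[S] = (m : ℝ) * ∫ x, f x ∂ν := hSmean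
      rw [hSθ, hPS]
      have hmm : (m : ℝ) * (m : ℝ)⁻¹ = 1 := mul_inv_cancel₀ hm0.ne'
      have h0 : (m : ℝ)⁻¹ * ∑ i, d (Z i θ) * f (Z i θ) - ∫ x, f x ∂ν
          = (m : ℝ)⁻¹ * (∑ i, d (Z i θ) * f (Z i θ) - (m : ℝ) * ∫ x, f x ∂ν) := by
        field_simp
      rw [h0, abs_mul, abs_of_pos (show (0:ℝ) < (m:ℝ)⁻¹ by positivity)] at hθ
      nlinarith [abs_nonneg (∑ i, d (Z i θ) * f (Z i θ) - (m : ℝ) * ∫ x, f x ∂ν)]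
    calc P {θ | δ < |(m : ℝ)⁻¹ * ∑ i, d (Z i θ) * f (Z i θ) - ∫ x, f x ∂ν|}
        ≤ P {θ | (m : ℝ) * δ ≤ |S θ - P[S]|} := measure_mono hsub
      _ ≤ ENNReal.ofReal (variance S P / ((m : ℝ) * δ) ^ 2) := cheb
      _ ≤ ENNReal.ofReal (K / ((m : ℝ) * δ ^ 2)) := by
          apply ENNReal.ofReal_le_ofReal
          rw [div_le_div_iff₀ (by positivity) (by positivity)]
          calc variance S P * ((m : ℝ) * δ ^ 2) ≤ ((m : ℝ) * K) * ((m : ℝ) * δ ^ 2) := by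
                apply mul_le_mul_of_nonneg_right hSvar (by positivity)
            _ = K * ((m : ℝ) * δ) ^ 2 := by ring
  -- union bound
  set G := {θ | ∀ f ∈ F, |(m : ℝ)⁻¹ * ∑ i, d (Z i θ) * f (Z i θ) - ∫ x, f x ∂ν| ≤ δ}
    with hG
  have hGc : Gᶜ ⊆ ⋃ f ∈ F, {θ | δ < |(m : ℝ)⁻¹ * ∑ i, d (Z i θ) * f (Z i θ) -
      ∫ x, f x ∂ν|} := by
    intro θ hθ
    simp only [hG, Set.mem_compl_iff, Set.mem_setOf_eq, not_forall] at hθ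
    obtain ⟨f, hf, hlt⟩ := hθ
    exact Set.mem_biUnion hf (by simpa using lt_of_not_ge hlt)
  have hGcbound : P Gᶜ ≤ ENNReal.ofReal γ := by
    calc P Gᶜ ≤ ∑ f ∈ F, P {θ | δ < |(m : ℝ)⁻¹ * ∑ i, d (Z i θ) * f (Z i θ) -
          ∫ x, f x ∂ν|} := (measure_mono hGc).trans (measure_biUnion_finset_le F _)
      _ ≤ ∑ _f ∈ F, ENNReal.ofReal (K / ((m : ℝ) * δ ^ 2)) :=
          Finset.sum_le_sum key
      _ = (F.card : ENNReal) * ENNReal.ofReal (K / ((m : ℝ) * δ ^ 2)) := by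
          simp [mul_comm]
      _ = ENNReal.ofReal ((F.card : ℝ) * (K / ((m : ℝ) * δ ^ 2))) := by
          rw [ENNReal.ofReal_mul (by positivity)]
          simp
      _ ≤ ENNReal.ofReal γ := by
          apply ENNReal.ofReal_le_ofReal
          rw [div_le_iff₀ hγ0] at hm
          have hinv : (δ ^ 2)⁻¹ * δ ^ 2 = 1 := inv_mul_cancel₀ (by positivity)
          have hKc : K * (F.card : ℝ) ≤ γ * ((m : ℝ) * δ ^ 2) := by
            calc K * (F.card : ℝ) = (δ ^ 2)⁻¹ * K * (F.card : ℝ) * δ ^ 2 := by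
                  field_simp
              _ ≤ (m : ℝ) * γ * δ ^ 2 := mul_le_mul_of_nonneg_right hm (sq_nonneg δ)
              _ = γ * ((m : ℝ) * δ ^ 2) := by ring
          rw [mul_div_assoc', div_le_iff₀ (by positivity : (0:ℝ) < (m:ℝ) * δ ^ 2)]
          nlinarith [hKc]
  have h1 : (1 : ENNReal) ≤ P G + P Gᶜ := by
    have := measure_union_le (μ := P) G Gᶜ
    rw [Set.union_compl_self] at this
    simpa using this
  have hfin : P G ≠ ⊤ := measure_ne_top _ _
  have hfinc : P Gᶜ ≠ ⊤ := measure_ne_top _ _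
  have h2 : (1 : ℝ) ≤ (P G).toReal + (P Gᶜ).toReal := by
    have := ENNReal.toReal_mono (by finiteness) h1
    rwa [ENNReal.toReal_add hfin hfinc, ENNReal.toReal_one] at this
  have h3 : (P Gᶜ).toReal ≤ γ := by
    have := ENNReal.toReal_mono ENNReal.ofReal_ne_top hGcbound
    rwa [ENNReal.toReal_ofReal hγ0.le] at this
  linarith
end

section
/- Suppose for every pair of databases D₁, D₂ differing in one element, ‖A(D₁) − A(D₂)‖₁ ≤ Δ, where A maps databases to ℝ^N. Then the mechanism M(D) = A(D) + (λ₁,…,λ_N), with λ_i i.i.d. Laplace(σ) noise, is (Δ/σ)-differentially private: for all such D₁, D₂ and measurable S ⊆ ℝ^N, P(M(D₁) ∈ S) ≤ e^{Δ/σ} P(M(D₂) ∈ S). -/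
open MeasureTheory ProbabilityTheory ENNReal
theorem lintegral_pi_prod' {N : ℕ} (f : Fin N → ℝ → ℝ≥0∞) (hf : ∀ i, Measurable (f i)) :
    ∫⁻ x : Fin N → ℝ, ∏ i, f i (x i) = ∏ i, ∫⁻ t, f i t := by
  induction N with
  | zero => simp [volume_pi, Measure.pi_empty_univ]
  | succ n ih =>
    have hm := (measurePreserving_piFinSuccAbove (fun _ : Fin (n + 1) => (volume : Measure ℝ)) 0).symm
    calc ∫⁻ x : Fin (n + 1) → ℝ, ∏ i, f i (x i)
        = ∫⁻ p : ℝ × (Fin n → ℝ), f 0 p.1 * ∏ j : Fin n, f (Fin.succ j) (p.2 j)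
            ∂((volume : Measure ℝ).prod (Measure.pi fun _ => volume)) := by
          rw [volume_pi, ← hm.lintegral_comp_emb (MeasurableEquiv.measurableEmbedding _)]
          congr 1
          ext p
          simp only [Function.comp_def, MeasurableEquiv.piFinSuccAbove_symm_apply,
            Fin.insertNthEquiv, Fin.insertNth_zero, Equiv.coe_fn_mk,
            Fin.prod_univ_succ, Fin.cons_zero, Fin.cons_succ, Fin.zero_succAbove, cast_eq]
      _ = (∫⁻ t, f 0 t) * ∫⁻ x : Fin n → ℝ, ∏ j : Fin n, f (Fin.succ j) (x j)
            ∂(Measure.pi fun _ => volume) := by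
          exact lintegral_prod_mul (hf 0).aemeasurable
            (Finset.measurable_prod _ fun (j : Fin n) _ =>
              (hf (Fin.succ j)).comp (measurable_pi_apply j)).aemeasurable
      _ = ∏ i, ∫⁻ t, f i t := by
          rw [← volume_pi, ih (fun j => f (Fin.succ j)) (fun j => hf (Fin.succ j)),
            Fin.prod_univ_succ]

theorem pi_withDensity' {N : ℕ} (g : ℝ → ℝ≥0∞) (hg : Measurable g)
    [SigmaFinite ((volume : Measure ℝ).withDensity g)] :
    Measure.pi (fun _ : Fin N => (volume : Measure ℝ).withDensity g) =
      (volume : Measure (Fin N → ℝ)).withDensity (fun x => ∏ i, g (x i)) := by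
  refine Measure.pi_eq fun s hs => ?_
  have key : ∀ x : Fin N → ℝ, (Set.univ.pi s).indicator (fun x => ∏ i, g (x i)) x
      = ∏ i, (s i).indicator g (x i) := by
    intro x
    by_cases hx : x ∈ Set.univ.pi s
    · rw [Set.indicator_of_mem hx]
      exact Finset.prod_congr rfl fun i _ =>
        (Set.indicator_of_mem (hx i (Set.mem_univ i)) g).symm
    · rw [Set.indicator_of_notMem hx]
      obtain ⟨i, hi⟩ := not_forall.mp (fun h => hx fun i _ => h i)
      exact (Finset.prod_eq_zero (Finset.mem_univ i) (Set.indicator_of_notMem hi g)).symm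
  calc ((volume : Measure (Fin N → ℝ)).withDensity fun x => ∏ i, g (x i)) (Set.univ.pi s)
      = ∫⁻ x in Set.univ.pi s, ∏ i, g (x i) :=
        withDensity_apply _ (MeasurableSet.univ_pi hs)
    _ = ∫⁻ x, (Set.univ.pi s).indicator (fun x => ∏ i, g (x i)) x :=
        (lintegral_indicator (MeasurableSet.univ_pi hs) _).symm
    _ = ∫⁻ x, ∏ i, (s i).indicator g (x i) := lintegral_congr key
    _ = ∏ i, ∫⁻ t, (s i).indicator g t :=
        lintegral_pi_prod' _ fun i => hg.indicator (hs i)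
    _ = ∏ i, ((volume : Measure ℝ).withDensity g) (s i) := by
        refine Finset.prod_congr rfl fun i _ => ?_
        rw [lintegral_indicator (hs i), withDensity_apply _ (hs i)]

/-- Laplacian mechanism: if ‖A(D₁) − A(D₂)‖₁ ≤ Δ for neighboring databases, then the
mechanism that adds i.i.d. Laplace(σ) noise to each coordinate of A(D) is
(Δ/σ)-differentially private. -/
theorem laplacian_mechanism_privacy
    {D : Type*} (Neighbor : D → D → Prop) (N : ℕ) (A : D → (Fin N → ℝ))
    (σ Δ : ℝ) (hσ : 0 < σ)
    (hΔ : ∀ D₁ D₂, Neighbor D₁ D₂ → ∑ i, |A D₁ i - A D₂ i| ≤ Δ)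
    {Θ : Type*} [MeasurableSpace Θ] (P : Measure Θ) [IsProbabilityMeasure P]
    (lam : Fin N → Θ → ℝ) (hmeas : ∀ i, Measurable (lam i))
    (hlaw : ∀ i, Measure.map (lam i) P =
      volume.withDensity (fun t => ENNReal.ofReal ((2 * σ)⁻¹ * Real.exp (-|t| / σ))))
    (hindep : iIndepFun lam P)
    (D₁ D₂ : D) (hnb : Neighbor D₁ D₂)
    (S : Set (Fin N → ℝ)) (hS : MeasurableSet S) :
    P {θ | (fun i => A D₁ i + lam i θ) ∈ S} ≤
      ENNReal.ofReal (Real.exp (Δ / σ)) * P {θ | (fun i => A D₂ i + lam i θ) ∈ S} := by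
  have hΔ0 : (0:ℝ) ≤ Δ :=
    le_trans (Finset.sum_nonneg fun i _ => abs_nonneg _) (hΔ D₁ D₂ hnb)
  have hone : (1 : ℝ≥0∞) ≤ ENNReal.ofReal (Real.exp (Δ / σ)) := by
    rw [← ENNReal.ofReal_one]
    exact ENNReal.ofReal_le_ofReal (Real.one_le_exp (div_nonneg hΔ0 hσ.le))
  rcases Nat.eq_zero_or_pos N with h0 | hpos
  · have hE : IsEmpty (Fin N) := by rw [h0]; infer_instance
    have hfun : (fun (θ : Θ) => (fun i => A D₁ i + lam i θ)) =
        (fun θ => (fun i => A D₂ i + lam i θ)) := by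
      funext θ; exact funext fun i => hE.elim i
    have hsets : {θ | (fun i => A D₁ i + lam i θ) ∈ S} =
        {θ | (fun i => A D₂ i + lam i θ) ∈ S} :=
      congrArg (fun F : Θ → Fin N → ℝ => F ⁻¹' S) hfun
    rw [hsets]
    exact le_mul_of_one_le_left zero_le hone
  -- main case
  set g : ℝ → ℝ≥0∞ := fun t => ENNReal.ofReal ((2 * σ)⁻¹ * Real.exp (-|t| / σ)) with hgdef
  have hg : Measurable g := by
    apply ENNReal.measurable_ofReal.comp
    exact (measurable_const.mul ((measurable_abs.neg.div_const σ).exp))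
  set ν : Measure ℝ := volume.withDensity g with hν
  obtain ⟨i₀⟩ : Nonempty (Fin N) := ⟨⟨0, hpos⟩⟩
  haveI hνp : IsProbabilityMeasure ν := by
    rw [← hlaw i₀]
    exact Measure.isProbabilityMeasure_map (hmeas i₀).aemeasurable
  set f : Θ → Fin N → ℝ := fun θ i => lam i θ with hfdef
  have hf : Measurable f := measurable_pi_lambda _ fun i => hmeas i
  set νs : Fin N → Measure ℝ := fun i => Measure.map (lam i) P with hνs
  haveI : ∀ i, IsProbabilityMeasure (νs i) := fun i =>
    Measure.isProbabilityMeasure_map (hmeas i).aemeasurable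
  have hmap : Measure.map f P = Measure.pi νs := by
    refine (Measure.pi_eq fun s hs => ?_).symm
    rw [Measure.map_apply hf (MeasurableSet.univ_pi hs)]
    have : f ⁻¹' Set.univ.pi s = ⋂ i, lam i ⁻¹' s i := by
      ext θ; simp [hfdef]
    rw [this, hindep.meas_iInter fun i => ⟨s i, hs i, rfl⟩]
    exact Finset.prod_congr rfl fun i _ =>
      (Measure.map_apply (hmeas i) (hs i)).symm
  have hpis : Measure.pi νs = Measure.pi (fun _ : Fin N => ν) :=
    congrArg Measure.pi (funext fun i => hlaw i)
  have hpi : Measure.pi (fun _ : Fin N => ν) =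
      (volume : Measure (Fin N → ℝ)).withDensity (fun x => ∏ i, g (x i)) :=
    pi_withDensity' g hg
  have hrep : ∀ a : Fin N → ℝ, P {θ | (fun i => a i + lam i θ) ∈ S} =
      ∫⁻ y, S.indicator (fun y => ∏ i, g (y i - a i)) y := by
    intro a
    have hFa : Measurable (fun y : Fin N → ℝ => ∏ i, g (y i - a i)) :=
      Finset.measurable_prod _ fun i _ =>
        hg.comp ((measurable_pi_apply i).sub measurable_const)
    have hadd : Measurable (fun x : Fin N → ℝ => a + x) :=
      measurable_const.add measurable_id
    have hset : {θ | (fun i => a i + lam i θ) ∈ S} = f ⁻¹' ((fun x => a + x) ⁻¹' S) := rfl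
    rw [hset, ← Measure.map_apply hf (hadd hS), hmap, hpis, hpi,
      withDensity_apply _ (hadd hS), ← lintegral_indicator (hadd hS)]
    have hind : ∀ x : Fin N → ℝ,
        ((fun x => a + x) ⁻¹' S).indicator (fun x => ∏ i, g (x i)) x
          = S.indicator (fun y => ∏ i, g (y i - a i)) (a + x) := by
      intro x
      by_cases hx : a + x ∈ S
      · rw [Set.indicator_of_mem hx, Set.indicator_of_mem (by exact hx)]
        exact Finset.prod_congr rfl fun i _ => by simp
      · rw [Set.indicator_of_notMem hx, Set.indicator_of_notMem (by exact hx)]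
    rw [lintegral_congr hind]
    exact (measurePreserving_add_left volume a).lintegral_comp (hFa.indicator hS)
  rw [hrep (A D₁), hrep (A D₂)]
  set c : ℝ≥0∞ := ENNReal.ofReal (Real.exp (Δ / σ)) with hc
  have hpt : ∀ y : Fin N → ℝ, S.indicator (fun y => ∏ i, g (y i - A D₁ i)) y ≤
      c * S.indicator (fun y => ∏ i, g (y i - A D₂ i)) y := by
    intro y
    by_cases hy : y ∈ S
    · rw [Set.indicator_of_mem hy, Set.indicator_of_mem hy]
      have h1 : ∀ i, g (y i - A D₁ i) ≤
          ENNReal.ofReal (Real.exp (|A D₁ i - A D₂ i| / σ)) * g (y i - A D₂ i) := by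
        intro i
        simp only [hgdef]
        rw [← ENNReal.ofReal_mul (Real.exp_nonneg _)]
        apply ENNReal.ofReal_le_ofReal
        have hmono : Real.exp (-|y i - A D₁ i| / σ) ≤
            Real.exp (|A D₁ i - A D₂ i| / σ) * Real.exp (-|y i - A D₂ i| / σ) := by
          rw [← Real.exp_add]
          apply Real.exp_le_exp.mpr
          rw [← add_div]
          have tri : |y i - A D₂ i| ≤ |y i - A D₁ i| + |A D₁ i - A D₂ i| :=
            abs_sub_le _ _ _
          gcongr
          linarith
        calc (2 * σ)⁻¹ * Real.exp (-|y i - A D₁ i| / σ)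
            ≤ (2 * σ)⁻¹ * (Real.exp (|A D₁ i - A D₂ i| / σ) *
                Real.exp (-|y i - A D₂ i| / σ)) :=
              mul_le_mul_of_nonneg_left hmono (by positivity)
          _ = Real.exp (|A D₁ i - A D₂ i| / σ) *
                ((2 * σ)⁻¹ * Real.exp (-|y i - A D₂ i| / σ)) := by ring
      calc ∏ i, g (y i - A D₁ i)
          ≤ ∏ i, (ENNReal.ofReal (Real.exp (|A D₁ i - A D₂ i| / σ)) * g (y i - A D₂ i)) :=
            Finset.prod_le_prod' fun i _ => h1 i
        _ = (∏ i, ENNReal.ofReal (Real.exp (|A D₁ i - A D₂ i| / σ))) *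
              ∏ i, g (y i - A D₂ i) := Finset.prod_mul_distrib
        _ ≤ c * ∏ i, g (y i - A D₂ i) := by
            apply mul_le_mul_left
            rw [← ENNReal.ofReal_prod_of_nonneg (fun i _ => Real.exp_nonneg _)]
            apply ENNReal.ofReal_le_ofReal
            rw [← Real.exp_sum]
            apply Real.exp_le_exp.mpr
            rw [← Finset.sum_div]
            gcongr
            exact hΔ D₁ D₂ hnb
    · rw [Set.indicator_of_notMem hy, Set.indicator_of_notMem hy, mul_zero]
  calc ∫⁻ y, S.indicator (fun y => ∏ i, g (y i - A D₁ i)) y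
      ≤ ∫⁻ y, c * S.indicator (fun y => ∏ i, g (y i - A D₂ i)) y := lintegral_mono hpt
    _ = c * ∫⁻ y, S.indicator (fun y => ∏ i, g (y i - A D₂ i)) y :=
        lintegral_const_mul' _ _ ENNReal.ofReal_ne_top
end

section
/- (Accuracy theorem) Let δ ∈ (0,1/2], γ ∈ (0,1/4), and σ = δ/log(|F|/γ). Let X₁,…,Xₙ be i.i.d. ∼ ν on Ω and Z₁,…,Z_m i.i.d. ∼ μ with κ(ν‖μ) ≤ K, where min(n,k) ≥ δ^{−2} log(|F|/γ) and m ≥ δ^{−2} K|F|/γ, and assume the constant function 1 belongs to F. Let λ(f), f ∈ F, be independent Laplace(σ) variables, let h* be a probability density on Ω* = {Z₁,…,Z_m} minimizing max_{f∈F} |∑_i f(Z_i)h(Z_i) − (1/n)∑_j f(X_j) − λ(f)| over densities h, and let Y₁,…,Y_k be drawn i.i.d. from Ω* with density h*. Then with probability at least 1 − 4γ, max_{f∈F} |(1/k)∑_{i=1}^k f(Y_i) − (1/n)∑_{j=1}^n f(X_j)| ≤ 8δ. -/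
open MeasureTheory ProbabilityTheory Finset
open scoped ENNReal

section SynthHelpers

lemma hoeff_scalar {p : ℝ} (hp0 : 0 ≤ p) (hp1 : p ≤ 1) {h : ℝ} (hh : 0 ≤ h) :
    Real.log (1 - p + p * Real.exp h) ≤ p * h + h ^ 2 / 8 := by
  set D : ℝ → ℝ := fun x => 1 - p + p * Real.exp x with hD
  have hDpos : ∀ x, 0 < D x := by
    intro x
    rcases eq_or_lt_of_le hp0 with h0 | h0
    · simp [hD, ← h0]
    · have h1 : 0 < p * Real.exp x := mul_pos h0 (Real.exp_pos x)
      have h2 : (0:ℝ) ≤ 1 - p := by linarith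
      simp only [hD]; linarith
  set g : ℝ → ℝ := fun x => p * Real.exp x / D x with hg
  have hDderiv : ∀ x, HasDerivAt D (p * Real.exp x) x := by
    intro x
    exact ((Real.hasDerivAt_exp x).const_mul p).const_add (1 - p)
  have hgderiv : ∀ x, HasDerivAt g (p * Real.exp x * (1 - p) / (D x) ^ 2) x := by
    intro x
    have h1 : HasDerivAt (fun x => p * Real.exp x) (p * Real.exp x) x :=
      (Real.hasDerivAt_exp x).const_mul p
    have h2 := h1.div (hDderiv x) (hDpos x).ne'
    have hDx : D x = 1 - p + p * Real.exp x := rfl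
    have h4 : p * Real.exp x * (1 - p) = p * Real.exp x * D x - p * Real.exp x * (p * Real.exp x) := by
      rw [hDx]; ring
    rw [h4]; exact h2
  have hgbound : ∀ x, p * Real.exp x * (1 - p) / (D x) ^ 2 ≤ 1 / 4 := by
    intro x
    have hDx : D x = 1 - p + p * Real.exp x := rfl
    rw [div_le_iff₀ (pow_pos (hDpos x) 2), hDx]
    nlinarith [sq_nonneg (1 - p - p * Real.exp x), Real.exp_pos x]
  have hg0 : g 0 = p := by simp [hg, hD]
  set u : ℝ → ℝ := fun x => p + x / 4 - g x with hu
  have huderiv : ∀ x, HasDerivAt u (1 / 4 - p * Real.exp x * (1 - p) / (D x) ^ 2) x := by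
    intro x
    exact (((hasDerivAt_id x).div_const 4).const_add p).sub (hgderiv x)
  have humono : Monotone u := by
    apply monotone_of_deriv_nonneg
    · exact fun x => (huderiv x).differentiableAt
    · intro x
      rw [(huderiv x).deriv]
      linarith [hgbound x]
  have hu0 : u 0 = 0 := by simp [hu, hg0]
  have hglin : ∀ x, 0 ≤ x → g x ≤ p + x / 4 := by
    intro x hx
    have := humono hx
    rw [hu0] at this
    simp only [hu] at this
    linarith
  set v : ℝ → ℝ := fun x => p * x + x ^ 2 / 8 - Real.log (D x) with hv
  have hφderiv : ∀ x, HasDerivAt (fun y => Real.log (D y)) (g x) x := by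
    intro x
    simpa [hg] using (hDderiv x).log (hDpos x).ne'
  have hvderiv : ∀ x, HasDerivAt v (p + x / 4 - g x) x := by
    intro x
    have h1 : HasDerivAt (fun y : ℝ => p * y) p x := by
      simpa using (hasDerivAt_id x).const_mul p
    have h2 : HasDerivAt (fun y : ℝ => y ^ 2 / 8) (x / 4) x := by
      have := (hasDerivAt_pow 2 x).div_const 8
      exact this.congr_deriv (by rw [Nat.cast_ofNat]; show (2:ℝ) * x ^ 1 / 8 = x / 4; ring)
    exact (h1.add h2).sub (hφderiv x)
  have hvmono : MonotoneOn v (Set.Ici 0) := by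
    apply monotoneOn_of_deriv_nonneg (convex_Ici 0)
    · exact (Differentiable.continuous fun x => (hvderiv x).differentiableAt).continuousOn
    · intro x _
      exact (hvderiv x).differentiableAt.differentiableWithinAt
    · intro x hx
      rw [(hvderiv x).deriv]
      rw [interior_Ici] at hx
      linarith [hglin x (le_of_lt hx)]
  have hv0 : v 0 = 0 := by simp [hv, hD]
  have hfin := hvmono (Set.self_mem_Ici) (Set.mem_Ici.2 hh) hh
  rw [hv0] at hfin
  have hvh : v h = p * h + h ^ 2 / 8 - Real.log (1 - p + p * Real.exp h) := rfl
  rw [hvh] at hfin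
  linarith

variable {Ω' : Type*} [MeasurableSpace Ω'] {P : Measure Ω'} [IsProbabilityMeasure P]

lemma bdd_integrable {W : Ω' → ℝ} (hW : Measurable W) {C : ℝ} (hC : ∀ ω, |W ω| ≤ C) :
    Integrable W P := by
  refine (integrable_const C).mono' hW.aestronglyMeasurable ?_
  filter_upwards with ω
  simpa [Real.norm_eq_abs] using hC ω

lemma mgf_hoeffding {W : Ω' → ℝ} (hW : Measurable W) {a b : ℝ} (hab : ∀ ω, W ω ∈ Set.Icc a b)
    (hmean : ∫ ω, W ω ∂P = 0) {s : ℝ} (hs : 0 ≤ s) :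
    mgf W P s ≤ Real.exp (s ^ 2 * (b - a) ^ 2 / 8) := by
  have hWint : Integrable W P := by
    refine bdd_integrable hW (C := max |a| |b|) fun ω => ?_
    exact abs_le_max_abs_abs (hab ω).1 (hab ω).2
  rcases le_or_gt b a with hba | hba
  · have hWa : ∀ ω, W ω = a := fun ω => le_antisymm (le_trans (hab ω).2 hba) (hab ω).1
    have hW0 : W = fun _ => a := funext hWa
    rw [hW0, integral_const] at hmean
    simp only [measureReal_def, measure_univ, ENNReal.toReal_one, smul_eq_mul, one_mul] at hmean
    rw [hW0, hmean]
    have : mgf (fun _ => (0:ℝ)) P s = Real.exp (s * 0) := mgf_const 0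
    rw [this]
    simp only [mul_zero, Real.exp_zero]
    exact Real.one_le_exp (by positivity)
  · have hba' : 0 < b - a := sub_pos.2 hba
    have ha0 : a ≤ 0 := by
      have := integral_mono (integrable_const a) hWint (fun ω => (hab ω).1)
      rw [hmean] at this; simpa using this
    have hb0 : 0 ≤ b := by
      have := integral_mono hWint (integrable_const b) (fun ω => (hab ω).2)
      rw [hmean] at this; simpa using this
    set p : ℝ := -a / (b - a) with hp
    have hp0 : 0 ≤ p := div_nonneg (neg_nonneg.2 ha0) hba'.le
    have hp1 : p ≤ 1 := by rw [hp, div_le_one hba']; linarith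
    set h : ℝ := s * (b - a) with hh
    have hhnn : 0 ≤ h := mul_nonneg hs hba'.le
    set A : ℝ := (b * Real.exp (s * a) - a * Real.exp (s * b)) / (b - a) with hA
    set B : ℝ := (Real.exp (s * b) - Real.exp (s * a)) / (b - a) with hB
    have key : mgf W P s ≤ A := by
      have hptw : ∀ ω, Real.exp (s * W ω) ≤ A + B * W ω := by
        intro ω
        have hα : (0:ℝ) ≤ (b - W ω) / (b - a) := div_nonneg (by linarith [(hab ω).2]) hba'.le
        have hβ : (0:ℝ) ≤ (W ω - a) / (b - a) := div_nonneg (by linarith [(hab ω).1]) hba'.le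
        have hαβ : (b - W ω) / (b - a) + (W ω - a) / (b - a) = 1 := by
          field_simp
          ring
        have hbane : b - a ≠ 0 := sub_ne_zero.2 (ne_of_gt hba)
        have hcvx := convexOn_exp.2 (Set.mem_univ (s * a)) (Set.mem_univ (s * b)) hα hβ hαβ
        have harg : ((b - W ω) / (b - a)) • (s * a) + ((W ω - a) / (b - a)) • (s * b)
            = s * W ω := by
          rw [smul_eq_mul, smul_eq_mul]
          field_simp
          ring
        rw [harg] at hcvx
        refine le_trans hcvx ?_
        rw [hA, hB]
        have heq2 : ((b - W ω) / (b - a)) • Real.exp (s * a)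
              + ((W ω - a) / (b - a)) • Real.exp (s * b)
            = (b * Real.exp (s * a) - a * Real.exp (s * b)) / (b - a)
              + (Real.exp (s * b) - Real.exp (s * a)) / (b - a) * W ω := by
          rw [smul_eq_mul, smul_eq_mul]
          field_simp
          ring
        rw [heq2]
      have hint2 : Integrable (fun ω => A + B * W ω) P :=
        (integrable_const A).add (hWint.const_mul B)
      have hint1 : Integrable (fun ω => Real.exp (s * W ω)) P := by
        refine bdd_integrable ((hW.const_mul s).exp) (C := Real.exp (s * b)) fun ω => ?_
        rw [abs_of_pos (Real.exp_pos _)]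
        exact Real.exp_le_exp.2 (mul_le_mul_of_nonneg_left (hab ω).2 hs)
      calc mgf W P s = ∫ ω, Real.exp (s * W ω) ∂P := rfl
        _ ≤ ∫ ω, (A + B * W ω) ∂P := integral_mono hint1 hint2 hptw
        _ = A + B * ∫ ω, W ω ∂P := by
            rw [integral_add (integrable_const A) (hWint.const_mul B), integral_const,
              integral_const_mul]
            simp
        _ = A := by rw [hmean]; ring
    have he : Real.exp (s * b) = Real.exp (s * a) * Real.exp h := by
      rw [← Real.exp_add, hh]; ring_nf
    have hsplit : A = Real.exp (s * a) * (1 - p + p * Real.exp h) := by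
      rw [hA, hp, he]
      field_simp
      ring
    have h1e : (1:ℝ) ≤ 1 - p + p * Real.exp h := by
      nlinarith [Real.one_le_exp hhnn]
    have hexp : 1 - p + p * Real.exp h ≤ Real.exp (p * h + h ^ 2 / 8) := by
      calc 1 - p + p * Real.exp h
          = Real.exp (Real.log (1 - p + p * Real.exp h)) := (Real.exp_log (by linarith)).symm
        _ ≤ _ := Real.exp_le_exp.2 (hoeff_scalar hp0 hp1 hhnn)
    calc mgf W P s ≤ A := key
      _ = Real.exp (s * a) * (1 - p + p * Real.exp h) := hsplit
      _ ≤ Real.exp (s * a) * Real.exp (p * h + h ^ 2 / 8) := by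
          have := Real.exp_pos (s * a)
          nlinarith
      _ = Real.exp (s * a + (p * h + h ^ 2 / 8)) := by rw [← Real.exp_add]
      _ = Real.exp (s ^ 2 * (b - a) ^ 2 / 8) := by
          congr 1
          rw [hp, hh]
          field_simp
          ring

lemma hoeffding_oneside {N : ℕ} {W : Fin N → Ω' → ℝ}
    (hindep : iIndepFun W P) (hmeas : ∀ j, Measurable (W j))
    (hbdd : ∀ j ω, |W j ω| ≤ 1) {c : ℝ} (hc : ∀ j, ∫ ω, W j ω ∂P = c)
    {t : ℝ} (ht : 0 ≤ t) :
    P {ω | (N:ℝ) * t ≤ ∑ j, (W j ω - c)} ≤ ENNReal.ofReal (Real.exp (-((N:ℝ) * t ^ 2) / 2)) := by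
  set V : Fin N → Ω' → ℝ := fun j ω => W j ω - c with hV
  have hVmeas : ∀ j, Measurable (V j) := fun j => (hmeas j).sub measurable_const
  have hVindep : iIndepFun V P := by
    have := hindep.comp (fun _ => fun x : ℝ => x - c) (fun _ => measurable_id.sub measurable_const)
    exact this
  have hVbdd : ∀ j ω, V j ω ∈ Set.Icc (-1 - c) (1 - c) := by
    intro j ω
    have := abs_le.1 (hbdd j ω)
    constructor <;> simp only [hV] <;> [linarith [this.1]; linarith [this.2]]
  have hVmean : ∀ j, ∫ ω, V j ω ∂P = 0 := by
    intro j
    rw [integral_sub (bdd_integrable (hmeas j) (hbdd j)) (integrable_const c), hc j,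
      integral_const]
    simp
  have hVintexp : ∀ j, Integrable (fun ω => Real.exp (t * V j ω)) P := by
    intro j
    refine bdd_integrable ((hVmeas j).const_mul t).exp (C := Real.exp (t * (1 - c))) fun ω => ?_
    rw [abs_of_pos (Real.exp_pos _)]
    exact Real.exp_le_exp.2 (mul_le_mul_of_nonneg_left (hVbdd j ω).2 ht)
  have hmgf : ∀ j, mgf (V j) P t ≤ Real.exp (t ^ 2 / 2) := by
    intro j
    have := mgf_hoeffding (hVmeas j) (hVbdd j) (hVmean j) ht
    convert this using 2
    ring
  have hintsum : Integrable (fun ω => Real.exp (t * (∑ j, V j) ω)) P :=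
    hVindep.integrable_exp_mul_sum hVmeas (fun j _ => hVintexp j)
  have hcher := measure_ge_le_exp_mul_mgf (X := ∑ j, V j) (μ := P) ((N:ℝ) * t) ht hintsum
  have hmgfsum : mgf (∑ j, V j) P t ≤ Real.exp ((N:ℝ) * t ^ 2 / 2) := by
    rw [hVindep.mgf_sum hVmeas]
    calc ∏ j : Fin N, mgf (V j) P t ≤ ∏ _j : Fin N, Real.exp (t ^ 2 / 2) :=
          Finset.prod_le_prod (fun j _ => mgf_nonneg) (fun j _ => hmgf j)
      _ = Real.exp ((N:ℝ) * t ^ 2 / 2) := by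
          rw [Finset.prod_const, ← Real.exp_nat_mul]
          simp [Finset.card_univ, mul_div_assoc]
  have hbound : (P {ω | (N:ℝ) * t ≤ (∑ j, V j) ω}).toReal ≤ Real.exp (-((N:ℝ) * t ^ 2) / 2) := by
    refine le_trans hcher ?_
    calc Real.exp (-t * ((N:ℝ) * t)) * mgf (∑ j, V j) P t
        ≤ Real.exp (-t * ((N:ℝ) * t)) * Real.exp ((N:ℝ) * t ^ 2 / 2) := by
          have := Real.exp_pos (-t * ((N:ℝ) * t))
          nlinarith [mgf_nonneg (X := ∑ j, V j) (μ := P) (t := t)]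
      _ = Real.exp (-((N:ℝ) * t ^ 2) / 2) := by
          rw [← Real.exp_add]; congr 1; ring
  have hset : {ω | (N:ℝ) * t ≤ ∑ j, (W j ω - c)} = {ω | (N:ℝ) * t ≤ (∑ j, V j) ω} := by
    ext ω; simp [hV]
  rw [hset]
  rw [← ENNReal.ofReal_toReal (measure_ne_top P _)]
  exact ENNReal.ofReal_le_ofReal hbound

lemma hoeffding_twoside {N : ℕ} (hN : 0 < N) {W : Fin N → Ω' → ℝ}
    (hindep : iIndepFun W P) (hmeas : ∀ j, Measurable (W j))
    (hbdd : ∀ j ω, |W j ω| ≤ 1) {c : ℝ} (hc : ∀ j, ∫ ω, W j ω ∂P = c)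
    {t : ℝ} (ht : 0 ≤ t) :
    P {ω | t < |(N:ℝ)⁻¹ * ∑ j, W j ω - c|} ≤
      ENNReal.ofReal (2 * Real.exp (-((N:ℝ) * t ^ 2) / 2)) := by
  have hNpos : (0:ℝ) < N := Nat.cast_pos.2 hN
  have hsub : {ω | t < |(N:ℝ)⁻¹ * ∑ j, W j ω - c|} ⊆
      {ω | (N:ℝ) * t ≤ ∑ j, (W j ω - c)} ∪ {ω | (N:ℝ) * t ≤ ∑ j, (-W j ω - -c)} := by
    intro ω hω
    simp only [Set.mem_setOf_eq] at hω
    have h1 : (N:ℝ) * t < |∑ j, (W j ω - c)| := by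
      have : ∑ j, (W j ω - c) = ∑ j, W j ω - (N:ℝ) * c := by
        rw [Finset.sum_sub_distrib, Finset.sum_const, Finset.card_univ]
        simp [nsmul_eq_mul]
      rw [this]
      have h2 : (N:ℝ)⁻¹ * ∑ j, W j ω - c = (N:ℝ)⁻¹ * (∑ j, W j ω - (N:ℝ) * c) := by
        field_simp
      rw [h2, abs_mul, abs_of_pos (inv_pos.2 hNpos)] at hω
      calc (N:ℝ) * t < (N:ℝ) * ((N:ℝ)⁻¹ * |∑ j, W j ω - (N:ℝ) * c|) := by
            exact (mul_lt_mul_iff_right₀ hNpos).2 hω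
        _ = |∑ j, W j ω - (N:ℝ) * c| := by field_simp
    rcases abs_cases (∑ j, (W j ω - c)) with ⟨heq, _⟩ | ⟨heq, _⟩
    · left; rw [Set.mem_setOf_eq]; rw [heq] at h1; linarith
    · right; rw [Set.mem_setOf_eq]
      have : ∑ j, (-W j ω - -c) = -∑ j, (W j ω - c) := by
        rw [← Finset.sum_neg_distrib]
        congr 1; funext j; ring
      rw [this, ← heq]
      linarith
  have hWn : iIndepFun (fun j ω => -W j ω) P :=
    hindep.comp (fun _ => fun x : ℝ => -x) (fun _ => measurable_neg)
  have h1 := hoeffding_oneside hindep hmeas hbdd hc ht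
  have h2 := hoeffding_oneside (W := fun j ω => -W j ω) hWn
    (fun j => (hmeas j).neg) (fun j ω => by rw [abs_neg]; exact hbdd j ω)
    (c := -c) (fun j => by rw [integral_neg, hc j]) ht
  calc P {ω | t < |(N:ℝ)⁻¹ * ∑ j, W j ω - c|}
      ≤ P ({ω | (N:ℝ) * t ≤ ∑ j, (W j ω - c)} ∪ {ω | (N:ℝ) * t ≤ ∑ j, (-W j ω - -c)}) :=
        measure_mono hsub
    _ ≤ _ + _ := measure_union_le _ _
    _ ≤ ENNReal.ofReal (Real.exp (-((N:ℝ) * t ^ 2) / 2)) +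
        ENNReal.ofReal (Real.exp (-((N:ℝ) * t ^ 2) / 2)) := add_le_add h1 h2
    _ = ENNReal.ofReal (2 * Real.exp (-((N:ℝ) * t ^ 2) / 2)) := by
        rw [← ENNReal.ofReal_add (Real.exp_pos _).le (Real.exp_pos _).le]
        congr 1; ring

lemma iIndepFun_precomp {Θ : Type*} [MeasurableSpace Θ] {P : Measure Θ}
    {ι ι' : Type*} {β : ι → Type*} {m : ∀ i, MeasurableSpace (β i)} {F : ∀ i, Θ → β i}
    (h : iIndepFun (m := m) F P) {g : ι' → ι} (hg : Function.Injective g) :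
    iIndepFun (m := fun i => m (g i)) (fun i => F (g i)) P := by
  classical
  rw [iIndepFun_iff_measure_inter_preimage_eq_mul] at h ⊢
  intro S sets hsets
  set bigsets : ∀ i, Set (β i) := fun i =>
    if hyp : ∃ j ∈ S, g j = i then
      cast (congrArg (fun x => Set (β x)) hyp.choose_spec.2) (sets hyp.choose)
    else Set.univ with hbigsets
  have hcast : ∀ (j : ι') (j' : ι') (e : g j' = g j), j' ∈ S → j ∈ S →
      (cast (congrArg (fun x => Set (β x)) e) (sets j') : Set (β (g j))) = sets j := by
    intro j j' e _ _
    have hj : j' = j := hg e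
    subst hj
    rfl
  have hbig_eq : ∀ j ∈ S, bigsets (g j) = sets j := by
    intro j hj
    have hyp : ∃ j' ∈ S, g j' = g j := ⟨j, hj, rfl⟩
    rw [hbigsets]
    simp only [dif_pos hyp]
    exact hcast j hyp.choose hyp.choose_spec.2 hyp.choose_spec.1 hj
  have hbig_meas : ∀ i ∈ S.image g, MeasurableSet[m i] (bigsets i) := by
    intro i hi
    rcases Finset.mem_image.1 hi with ⟨j, hj, rfl⟩
    rw [hbig_eq j hj]
    exact hsets j hj
  have := h (S.image g) hbig_meas
  have hL : (⋂ i ∈ S.image g, F i ⁻¹' bigsets i) = ⋂ j ∈ S, F (g j) ⁻¹' sets j := by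
    rw [Finset.set_biInter_finset_image]
    exact Set.iInter₂_congr fun j hj => by rw [hbig_eq j hj]
  have hR : ∏ i ∈ S.image g, P (F i ⁻¹' bigsets i) = ∏ j ∈ S, P (F (g j) ⁻¹' sets j) := by
    rw [Finset.prod_image (fun a _ b _ hab => hg hab)]
    exact Finset.prod_congr rfl fun j hj => by rw [hbig_eq j hj]
  rw [hL, hR] at this
  exact this

lemma integral_comp_fin {Θ : Type*} [MeasurableSpace Θ] (P : Measure Θ) [IsProbabilityMeasure P]
    {m : ℕ} (Y : Θ → Fin m) (hY : Measurable Y) (φ : Fin m → ℝ) :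
    ∫ θ, φ (Y θ) ∂P = ∑ j, φ j * (P {θ | Y θ = j}).toReal := by
  have hmap : ∫ θ, φ (Y θ) ∂P = ∫ j, φ j ∂(P.map Y) := by
    rw [integral_map hY.aemeasurable]
    exact (Measurable.of_discrete (f := φ)).aestronglyMeasurable
  rw [hmap, integral_fintype (by
    exact Integrable.of_finite)]
  refine Finset.sum_congr rfl fun j _ => ?_
  rw [measureReal_def, Measure.map_apply hY (MeasurableSet.singleton j)]
  have : Y ⁻¹' {j} = {θ | Y θ = j} := by ext θ; simp
  rw [this, smul_eq_mul, mul_comm]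

lemma union_card_bound {Θ ι : Type*} [MeasurableSpace Θ] [Fintype ι] (Q : Measure Θ)
    (s : ι → Set Θ) {b : ℝ} (hb0 : 0 ≤ b) (hb : ∀ i, Q (s i) ≤ ENNReal.ofReal b) :
    Q (⋃ i, s i) ≤ ENNReal.ofReal ((Fintype.card ι : ℝ) * b) := by
  calc Q (⋃ i, s i) ≤ ∑' i, Q (s i) := measure_iUnion_le s
    _ = ∑ i, Q (s i) := tsum_fintype _
    _ ≤ ∑ _i : ι, ENNReal.ofReal b := Finset.sum_le_sum fun i _ => hb i
    _ = (Fintype.card ι : ℝ≥0∞) * ENNReal.ofReal b := by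
        rw [Finset.sum_const, Finset.card_univ, nsmul_eq_mul]
    _ = ENNReal.ofReal ((Fintype.card ι : ℝ) * b) := by
        rw [ENNReal.ofReal_mul (by positivity : (0:ℝ) ≤ (Fintype.card ι : ℝ)),
          ENNReal.ofReal_natCast]

lemma Measurable.abs'' {α : Type*} [MeasurableSpace α] {f : α → ℝ} (hf : Measurable f) :
    Measurable fun x => |f x| := by
  have h : (fun x => |f x|) = fun x => (f x) ⊔ (-(f x)) := by
    funext x
    rw [abs_eq_max_neg]
  rw [h]
  exact hf.max hf.neg

end SynthHelpers

set_option maxHeartbeats 2000000 in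
/-- Accuracy of the private synthetic data algorithm (Theorem 2, "Accuracy").
The test functions are `f i`, `i : ι` (so `|F| = card ι`), all with values in `[−1,1]`,
and the constant function `1` is among them. The true data `X₁,…,Xₙ` is i.i.d. from `ν`;
the reduced space `Ω* = {Z₁,…,Z_m}` is i.i.d. from `μ`, with Rényi condition number
`κ(ν‖μ) = ∫ (dν/dμ)² dμ ≤ K`; the noises `λ(f)` are Laplace(σ) with
`σ = δ / log(|F|/γ)`; `X`, `Z`, `λ` are jointly independent (over the source `Θ₀`).
`h*` is, for every realization, a probability density on `Fin m` (i.e. on `Ω*`) minimizing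
`max_{f∈F} |∑_j f(Z_j)h(Z_j) − (1/n)∑_l f(X_l) − λ(f)|` over densities `h`. The bootstrap
sample `Y₁,…,Y_k` is drawn (using the independent source `Θ₁`) i.i.d. from `Ω*` with
density `h*`, encoded by the indices `Yidx l ∈ Fin m`, so `Y_l = Z_{Yidx l}`.
If `min(n,k) ≥ δ⁻² log(|F|/γ)` and `m ≥ δ⁻² K|F|/γ`, with `δ ∈ (0,1/2]`, `γ ∈ (0,1/4)`,
then with probability at least `1 − 4γ` the synthetic data is `8δ`-accurate. -/
theorem synthetic_data_accuracy
    {Ω : Type} [MeasurableSpace Ω]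
    (μ ν : Measure Ω) [IsProbabilityMeasure μ] [IsProbabilityMeasure ν]
    (hac : ν ≪ μ) (K : ℝ)
    (hκint : Integrable (fun x => ((ν.rnDeriv μ x).toReal) ^ 2) μ)
    (hκ : ∫ x, ((ν.rnDeriv μ x).toReal) ^ 2 ∂μ ≤ K)
    -- the family of test functions
    {ι : Type*} [Fintype ι] [Nonempty ι] (f : ι → Ω → ℝ)
    (hfmeas : ∀ i, Measurable (f i)) (hfbdd : ∀ i x, |f i x| ≤ 1)
    (hf1 : ∃ i₀, f i₀ = fun _ => (1 : ℝ))
    -- parameters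
    (δ γ σ : ℝ) (hδ : δ ∈ Set.Ioc (0 : ℝ) (1 / 2)) (hγ : γ ∈ Set.Ioo (0 : ℝ) (1 / 4))
    (hσ : σ = δ / Real.log ((Fintype.card ι : ℝ) / γ))
    (n m k : ℕ)
    (hn : (δ ^ 2)⁻¹ * Real.log ((Fintype.card ι : ℝ) / γ) ≤ (n : ℝ))
    (hk : (δ ^ 2)⁻¹ * Real.log ((Fintype.card ι : ℝ) / γ) ≤ (k : ℝ))
    (hm : (δ ^ 2)⁻¹ * K * (Fintype.card ι : ℝ) / γ ≤ (m : ℝ))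
    -- randomness sources
    {Θ₀ : Type*} [MeasurableSpace Θ₀] (P₀ : Measure Θ₀) [IsProbabilityMeasure P₀]
    {Θ₁ : Type*} [MeasurableSpace Θ₁] (P₁ : Measure Θ₁) [IsProbabilityMeasure P₁]
    -- the true data X₁,…,Xₙ, i.i.d. from ν
    (X : Fin n → Θ₀ → Ω) (hXmeas : ∀ j, Measurable (X j))
    (hXlaw : ∀ j, Measure.map (X j) P₀ = ν)
    -- the reduced space Z₁,…,Z_m, i.i.d. from μ
    (Z : Fin m → Θ₀ → Ω) (hZmeas : ∀ j, Measurable (Z j))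
    (hZlaw : ∀ j, Measure.map (Z j) P₀ = μ)
    -- the Laplacian noises λ(f), f ∈ F, with parameter σ
    (lam : ι → Θ₀ → ℝ) (hlammeas : ∀ i, Measurable (lam i))
    (hlamtail : ∀ i, ∀ t : ℝ, 0 ≤ t →
      (P₀ {θ | t < |lam i θ|}).toReal = Real.exp (-t / σ))
    -- X, Z and λ are jointly independent
    (hindep : iIndepFun
      (β := fun s : (Fin n ⊕ Fin m) ⊕ ι => match s with | .inl _ => Ω | .inr _ => ℝ)
      (m := fun s => match s with | .inl _ => inferInstance | .inr _ => inferInstance)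
      (fun s => match s with
        | .inl (.inl j) => X j
        | .inl (.inr j) => Z j
        | .inr i => lam i) P₀)
    -- h* is a minimizing probability density on Ω* = {Z₁,…,Z_m}
    (hstar : Θ₀ → Fin m → ℝ) (hstarmeas : ∀ j, Measurable (fun θ₀ => hstar θ₀ j))
    (hstar_nonneg : ∀ θ₀ j, 0 ≤ hstar θ₀ j)
    (hstar_sum : ∀ θ₀, ∑ j, hstar θ₀ j = 1)
    (hstar_min : ∀ θ₀, ∀ h : Fin m → ℝ, (∀ j, 0 ≤ h j) → ∑ j, h j = 1 →
      (univ.sup' univ_nonempty fun i =>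
        |∑ j, f i (Z j θ₀) * hstar θ₀ j - (n : ℝ)⁻¹ * ∑ l, f i (X l θ₀) - lam i θ₀|) ≤
      (univ.sup' univ_nonempty fun i =>
        |∑ j, f i (Z j θ₀) * h j - (n : ℝ)⁻¹ * ∑ l, f i (X l θ₀) - lam i θ₀|))
    -- the bootstrap sample Y₁,…,Y_k, drawn i.i.d. from Ω* with density h*,
    -- encoded by its indices in {1,…,m}
    (Yidx : Fin k → Θ₀ → Θ₁ → Fin m)
    (hYmeas : ∀ l, Measurable (fun p : Θ₀ × Θ₁ => Yidx l p.1 p.2))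
    (hYindep : ∀ θ₀, iIndepFun (fun l => Yidx l θ₀) P₁)
    (hYlaw : ∀ θ₀ l j, P₁ {θ₁ | Yidx l θ₀ θ₁ = j} = ENNReal.ofReal (hstar θ₀ j)) :
    -- conclusion: with probability ≥ 1 − 4γ, the synthetic data is 8δ-accurate
    1 - 4 * γ ≤ ((P₀.prod P₁) {p | ∀ i,
        |(k : ℝ)⁻¹ * ∑ l, f i (Z (Yidx l p.1 p.2) p.1) -
          (n : ℝ)⁻¹ * ∑ j, f i (X j p.1)| ≤ 8 * δ}).toReal := by
  classical
  obtain ⟨hδ0, hδ2⟩ := hδ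
  obtain ⟨hγ0, hγ4⟩ := hγ
  set cardR : ℝ := (Fintype.card ι : ℝ) with hcardR
  have hcard1 : (1:ℝ) ≤ cardR := by
    rw [hcardR]
    exact_mod_cast Nat.one_le_iff_ne_zero.2 Fintype.card_ne_zero
  have hcard0 : (0:ℝ) < cardR := lt_of_lt_of_le one_pos hcard1
  set L : ℝ := Real.log (cardR / γ) with hLdef
  have hL0 : 0 < L := Real.log_pos (by
    rw [lt_div_iff₀ hγ0]; nlinarith)
  have hexpL : Real.exp (-L) = γ / cardR := by
    rw [Real.exp_neg, Real.exp_log (by positivity), inv_div]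
  -- the density
  set gfun : Ω → ℝ := fun x => ((ν.rnDeriv μ x).toReal) with hgfun
  have hgmeas : Measurable gfun := (Measure.measurable_rnDeriv ν μ).ennreal_toReal
  have hgnn : ∀ x, 0 ≤ gfun x := fun x => ENNReal.toReal_nonneg
  have hgint1 : ∫ x, gfun x ∂μ = 1 := by
    rw [hgfun]
    rw [Measure.integral_toReal_rnDeriv hac]
    simp
  have hgsq_int : Integrable (fun x => gfun x ^ 2) μ := hκint
  have hgmem : MemLp gfun 2 μ :=
    (memLp_two_iff_integrable_sq hgmeas.aestronglyMeasurable).2 hgsq_int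
  have hK1 : (1:ℝ) ≤ K := by
    have hv := variance_nonneg gfun μ
    rw [variance_eq_sub hgmem] at hv
    have : (∫ x, gfun x ∂μ) ^ 2 ≤ ∫ x, gfun x ^ 2 ∂μ := by
      simpa [Pi.pow_apply] using hv
    rw [hgint1] at this
    simpa using le_trans this hκ
  have hK0 : (0:ℝ) < K := lt_of_lt_of_le one_pos hK1
  -- positivity of n, k, m
  have hnR : L ≤ (n:ℝ) * δ ^ 2 := by
    have h1 := hn
    rw [inv_mul_le_iff₀ (by positivity)] at h1
    linarith [h1]
  have hkR : L ≤ (k:ℝ) * δ ^ 2 := by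
    have h1 := hk
    rw [inv_mul_le_iff₀ (by positivity)] at h1
    linarith [h1]
  have hn0 : 0 < n := by
    by_contra hcon
    push_neg at hcon
    interval_cases n
    simp only [Nat.cast_zero, zero_mul] at hnR
    linarith
  have hk0 : 0 < k := by
    by_contra hcon
    push_neg at hcon
    interval_cases k
    simp only [Nat.cast_zero, zero_mul] at hkR
    linarith
  have hm0R : (0:ℝ) < m := by
    calc (0:ℝ) < (δ ^ 2)⁻¹ * K * cardR / γ := by positivity
      _ ≤ m := hm
  have hm0 : 0 < m := by exact_mod_cast hm0R
  have hnR0 : (0:ℝ) < n := by exact_mod_cast hn0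
  have hkR0 : (0:ℝ) < k := by exact_mod_cast hk0
  -- basic quantities
  set I : ι → ℝ := fun i => ∫ x, f i x ∂ν with hIdef
  have hfint : ∀ i, Integrable (f i) ν := fun i => bdd_integrable (hfmeas i) (fun x => hfbdd i x)
  have hI1 : ∀ i, |I i| ≤ 1 := by
    intro i
    rw [hIdef]
    calc |∫ x, f i x ∂ν| ≤ ∫ x, |f i x| ∂ν := by
          simpa [Real.norm_eq_abs] using norm_integral_le_integral_norm (f := f i) (μ := ν)
      _ ≤ ∫ _x, (1:ℝ) ∂ν := integral_mono (hfint i).abs (integrable_const 1)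
          (fun x => hfbdd i x)
      _ = 1 := by simp
  set φ : ι → Ω → ℝ := fun i x => f i x * gfun x with hφdef
  have hφmeas : ∀ i, Measurable (φ i) := fun i => (hfmeas i).mul hgmeas
  have hφabs : ∀ i x, |φ i x| ≤ gfun x := by
    intro i x
    rw [hφdef]
    calc |f i x * gfun x| = |f i x| * |gfun x| := abs_mul _ _
      _ ≤ 1 * |gfun x| := by
          apply mul_le_mul_of_nonneg_right (hfbdd i x) (abs_nonneg _)
      _ = gfun x := by rw [one_mul, abs_of_nonneg (hgnn x)]
  have hφint : ∀ i, ∫ x, φ i x ∂μ = I i := by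
    intro i
    have h1 : (fun x => φ i x) = fun x => (ν.rnDeriv μ x).toReal • f i x := by
      funext x
      rw [hφdef]
      simp [smul_eq_mul, mul_comm, hgfun]
    rw [h1, integral_rnDeriv_smul hac]
  -- expectations of the X-samples
  have hXmean : ∀ i l, ∫ θ, f i (X l θ) ∂P₀ = I i := by
    intro i l
    have := integral_map (hXmeas l).aemeasurable (hfmeas i).aestronglyMeasurable (μ := P₀)
    rw [hXlaw l] at this
    rw [← this, hIdef]
  -- expectations of the φ(Z)-samples
  have hZmean : ∀ i j, ∫ θ, φ i (Z j θ) ∂P₀ = I i := by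
    intro i j
    have := integral_map (hZmeas j).aemeasurable (hφmeas i).aestronglyMeasurable (μ := P₀)
    rw [hZlaw j] at this
    rw [← this, hφint i]
  -- sub-family independence
  have hXind : iIndepFun X P₀ := by
    have h := iIndepFun_precomp hindep
      (g := fun l : Fin n => (Sum.inl (Sum.inl l) : (Fin n ⊕ Fin m) ⊕ ι))
      (fun a b hab => by simpa using hab)
    exact h
  -- the Laplace bad event
  set Blam : Set Θ₀ := ⋃ i, {θ | δ < |lam i θ|} with hBlamdef
  have hBlam_meas : MeasurableSet Blam :=
    MeasurableSet.iUnion fun i => measurableSet_lt measurable_const (hlammeas i).abs''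
  have hBlam_bound : P₀ Blam ≤ ENNReal.ofReal γ := by
    have hper : ∀ i, P₀ {θ | δ < |lam i θ|} ≤ ENNReal.ofReal (γ / cardR) := by
      intro i
      have h1 := hlamtail i δ hδ0.le
      have h2 : -δ / σ = -L := by
        rw [hσ]
        field_simp
      rw [h2, hexpL] at h1
      rw [← ENNReal.ofReal_toReal (measure_ne_top P₀ _), h1]
    calc P₀ Blam ≤ ENNReal.ofReal (cardR * (γ / cardR)) :=
          union_card_bound P₀ _ (by positivity) hper
      _ = ENNReal.ofReal γ := by
          congr 1
          field_simp
  -- the Z (Chebyshev) bad event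
  set BZ : Set Θ₀ := ⋃ i, {θ | (m:ℝ) * δ ≤ |∑ j, φ i (Z j θ) - (m:ℝ) * I i|} with hBZdef
  have hBZ_meas : MeasurableSet BZ := MeasurableSet.iUnion fun i => measurableSet_le
    measurable_const
    ((Finset.measurable_sum univ fun j _ => (hφmeas i).comp (hZmeas j)).sub measurable_const).abs''
  have hBZ_bound : P₀ BZ ≤ ENNReal.ofReal γ := by
    have hφsqle : ∀ i x, φ i x ^ 2 ≤ gfun x ^ 2 := by
      intro i x
      have h := abs_le.1 (hφabs i x)
      nlinarith [hgnn x]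
    have hper : ∀ i, P₀ {θ | (m:ℝ) * δ ≤ |∑ j, φ i (Z j θ) - (m:ℝ) * I i|} ≤
        ENNReal.ofReal (K / ((m:ℝ) * δ ^ 2)) := by
      intro i
      have hWmeas : ∀ j : Fin m, Measurable (fun θ => φ i (Z j θ)) :=
        fun j => (hφmeas i).comp (hZmeas j)
      have hgZint : ∀ j : Fin m, Integrable (fun θ => gfun (Z j θ) ^ 2) P₀ := by
        intro j
        have h1 : Integrable (fun x => gfun x ^ 2) (Measure.map (Z j) P₀) := by
          rw [hZlaw j]; exact hgsq_int
        exact (integrable_map_measure ((hgmeas.pow_const 2).aestronglyMeasurable)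
          (hZmeas j).aemeasurable).1 h1
      have hWsq_int : ∀ j : Fin m, Integrable (fun θ => φ i (Z j θ) ^ 2) P₀ := by
        intro j
        refine (hgZint j).mono' ((hWmeas j).pow_const 2).aestronglyMeasurable ?_
        filter_upwards with θ
        rw [Real.norm_eq_abs, abs_of_nonneg (sq_nonneg _)]
        exact hφsqle i (Z j θ)
      have hWmem : ∀ j : Fin m, MemLp (fun θ => φ i (Z j θ)) 2 P₀ := fun j =>
        (memLp_two_iff_integrable_sq (hWmeas j).aestronglyMeasurable).2 (hWsq_int j)
      have hWvar : ∀ j : Fin m, variance (fun θ => φ i (Z j θ)) P₀ ≤ K := by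
        intro j
        calc variance (fun θ => φ i (Z j θ)) P₀ ≤ ∫ θ, φ i (Z j θ) ^ 2 ∂P₀ := by
              have := variance_le_expectation_sq (X := fun θ => φ i (Z j θ)) (μ := P₀)
                (hWmeas j).aestronglyMeasurable
              simpa [Pi.pow_apply] using this
          _ = ∫ x, φ i x ^ 2 ∂μ := by
              have := integral_map (hZmeas j).aemeasurable
                ((hφmeas i).pow_const 2).aestronglyMeasurable (μ := P₀)
              rw [hZlaw j] at this
              rw [← this]
          _ ≤ ∫ x, gfun x ^ 2 ∂μ := by
              refine integral_mono ?_ hgsq_int (fun x => hφsqle i x)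
              refine hgsq_int.mono' ((hφmeas i).pow_const 2).aestronglyMeasurable ?_
              filter_upwards with x
              rw [Real.norm_eq_abs, abs_of_nonneg (sq_nonneg _)]
              exact hφsqle i x
          _ ≤ K := hκ
      have hpair : Set.Pairwise ↑(univ : Finset (Fin m))
          (fun j1 j2 => IndepFun (fun θ => φ i (Z j1 θ)) (fun θ => φ i (Z j2 θ)) P₀) := by
        intro j1 _ j2 _ hj12
        have hne : (Sum.inl (Sum.inr j1) : (Fin n ⊕ Fin m) ⊕ ι) ≠ Sum.inl (Sum.inr j2) := by
          simp only [ne_eq, Sum.inl.injEq, Sum.inr.injEq]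
          exact hj12
        have hZZ := hindep.indepFun hne
        exact hZZ.comp (hφmeas i) (hφmeas i)
      have hSmem : MemLp (fun θ => ∑ j, φ i (Z j θ)) 2 P₀ := by
        have := memLp_finset_sum' (μ := P₀) univ (f := fun (j : Fin m) (θ : Θ₀) => φ i (Z j θ))
          (fun j _ => hWmem j)
        convert this using 1
        funext θ
        rw [Finset.sum_apply]
      have hSvar : variance (fun θ => ∑ j, φ i (Z j θ)) P₀ ≤ (m:ℝ) * K := by
        have h1 := IndepFun.variance_sum (μ := P₀)
          (X := fun (j : Fin m) (θ : Θ₀) => φ i (Z j θ)) (s := univ)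
          (fun j _ => hWmem j) hpair
        have h2 : (fun θ => ∑ j, φ i (Z j θ)) = ∑ j : Fin m, (fun θ => φ i (Z j θ)) := by
          funext θ
          rw [Finset.sum_apply]
        rw [h2, h1]
        calc ∑ j : Fin m, variance (fun θ => φ i (Z j θ)) P₀ ≤ ∑ _j : Fin m, K :=
              Finset.sum_le_sum fun j _ => hWvar j
          _ = (m:ℝ) * K := by
              rw [Finset.sum_const, Finset.card_univ, Fintype.card_fin, nsmul_eq_mul]
      have hSmean : ∫ θ, ∑ j, φ i (Z j θ) ∂P₀ = (m:ℝ) * I i := by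
        rw [integral_finset_sum univ (fun j _ => (hWmem j).integrable one_le_two)]
        rw [Finset.sum_congr rfl (fun j _ => hZmean i j), Finset.sum_const, Finset.card_univ,
          Fintype.card_fin, nsmul_eq_mul]
      have hcheb := meas_ge_le_variance_div_sq (μ := P₀)
        (X := fun θ => ∑ j, φ i (Z j θ)) hSmem (c := (m:ℝ) * δ) (by positivity)
      have hrw : {θ | (m:ℝ) * δ ≤ |∑ j, φ i (Z j θ) - (m:ℝ) * I i|} =
          {θ | (m:ℝ) * δ ≤ |(fun θ => ∑ j, φ i (Z j θ)) θ - ∫ θ', ∑ j, φ i (Z j θ') ∂P₀|} := by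
        ext θ
        simp only [Set.mem_setOf_eq, hSmean]
      rw [hrw]
      refine le_trans hcheb (ENNReal.ofReal_le_ofReal ?_)
      rw [div_le_div_iff₀ (by positivity) (by positivity)]
      nlinarith [hSvar, variance_nonneg (fun θ => ∑ j, φ i (Z j θ)) P₀, pow_pos hδ0 2,
        mul_pos hm0R (pow_pos hδ0 2)]
    calc P₀ BZ ≤ ENNReal.ofReal (cardR * (K / ((m:ℝ) * δ ^ 2))) :=
          union_card_bound P₀ _ (by positivity) hper
      _ ≤ ENNReal.ofReal γ := by
          refine ENNReal.ofReal_le_ofReal ?_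
          have hmain : cardR * K ≤ γ * ((m:ℝ) * δ ^ 2) := by
            have h1 := hm
            rw [div_le_iff₀ hγ0] at h1
            calc cardR * K = ((δ ^ 2)⁻¹ * K * cardR) * δ ^ 2 := by
                  field_simp
                _ ≤ ((m:ℝ) * γ) * δ ^ 2 := by nlinarith [pow_pos hδ0 2]
                _ = γ * ((m:ℝ) * δ ^ 2) := by ring
          have heq : cardR * (K / ((m:ℝ) * δ ^ 2)) = (cardR * K) / ((m:ℝ) * δ ^ 2) := by ring
          rw [heq, div_le_iff₀ (by positivity)]
          linarith
  -- the X (Hoeffding) bad event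
  set BX : Set Θ₀ := ⋃ i, {θ | 2 * δ < |(n:ℝ)⁻¹ * ∑ l, f i (X l θ) - I i|} with hBXdef
  have hBX_meas : MeasurableSet BX := MeasurableSet.iUnion fun i => measurableSet_lt
    measurable_const
    (((Finset.measurable_sum univ fun l _ => (hfmeas i).comp (hXmeas l)).const_mul
      ((n:ℝ)⁻¹)).sub measurable_const).abs''
  have hexpbound : Real.exp (-((n:ℝ) * (2*δ) ^ 2) / 2) ≤ (γ / cardR) ^ 2 := by
    calc Real.exp (-((n:ℝ) * (2*δ) ^ 2) / 2) ≤ Real.exp (-(2*L)) := by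
          apply Real.exp_le_exp.2
          nlinarith [hnR]
      _ = (γ / cardR) ^ 2 := by
          rw [show -(2*L) = -L + -L by ring, Real.exp_add, hexpL, sq]
  have hexpboundk : Real.exp (-((k:ℝ) * (2*δ) ^ 2) / 2) ≤ (γ / cardR) ^ 2 := by
    calc Real.exp (-((k:ℝ) * (2*δ) ^ 2) / 2) ≤ Real.exp (-(2*L)) := by
          apply Real.exp_le_exp.2
          nlinarith [hkR]
      _ = (γ / cardR) ^ 2 := by
          rw [show -(2*L) = -L + -L by ring, Real.exp_add, hexpL, sq]
  have hcard2 : cardR * (2 * (γ / cardR) ^ 2) ≤ γ / 2 := by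
    have h1 : cardR * (2 * (γ / cardR) ^ 2) = 2 * γ ^ 2 / cardR := by
      field_simp
    rw [h1]
    have h2 : 2 * γ ^ 2 / cardR ≤ 2 * γ ^ 2 := by
      apply div_le_self (by positivity) hcard1
    nlinarith
  have hBX_bound : P₀ BX ≤ ENNReal.ofReal (γ / 2) := by
    have hper : ∀ i, P₀ {θ | 2 * δ < |(n:ℝ)⁻¹ * ∑ l, f i (X l θ) - I i|} ≤
        ENNReal.ofReal (2 * (γ / cardR) ^ 2) := by
      intro i
      have hXfind : iIndepFun
          (fun l => fun θ => f i (X l θ)) P₀ := by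
        have := hXind.comp (fun _ => f i) (fun _ => hfmeas i)
        exact this
      have hh := hoeffding_twoside (P := P₀) hn0 hXfind
        (fun l => (hfmeas i).comp (hXmeas l)) (fun l θ => hfbdd i (X l θ))
        (c := I i) (fun l => hXmean i l) (t := 2 * δ) (by positivity)
      refine le_trans hh (ENNReal.ofReal_le_ofReal ?_)
      nlinarith [hexpbound]
    calc P₀ BX ≤ ENNReal.ofReal (cardR * (2 * (γ / cardR) ^ 2)) :=
          union_card_bound P₀ _ (by positivity) hper
      _ ≤ ENNReal.ofReal (γ / 2) := ENNReal.ofReal_le_ofReal hcard2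
  -- the Y (bootstrap Hoeffding) bound, for every θ₀
  have hYbound : ∀ (θ₀ : Θ₀) (i : ι), P₁ {θ₁ | 2 * δ <
      |(k:ℝ)⁻¹ * ∑ l, f i (Z (Yidx l θ₀ θ₁) θ₀) - ∑ j, f i (Z j θ₀) * hstar θ₀ j|} ≤
      ENNReal.ofReal (2 * (γ / cardR) ^ 2) := by
    intro θ₀ i
    have hYlmeas : ∀ l : Fin k, Measurable (fun θ₁ => Yidx l θ₀ θ₁) :=
      fun l => (hYmeas l).comp measurable_prodMk_left
    have hWind : iIndepFun
        (fun l => fun θ₁ => f i (Z (Yidx l θ₀ θ₁) θ₀)) P₁ := by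
      have := (hYindep θ₀).comp (fun _ => fun j : Fin m => f i (Z j θ₀))
        (fun _ => Measurable.of_discrete)
      exact this
    have hWmeas : ∀ l, Measurable (fun θ₁ => f i (Z (Yidx l θ₀ θ₁) θ₀)) := fun l =>
      (Measurable.of_discrete (f := fun j : Fin m => f i (Z j θ₀))).comp (hYlmeas l)
    have hWmean : ∀ l, ∫ θ₁, f i (Z (Yidx l θ₀ θ₁) θ₀) ∂P₁ =
        ∑ j, f i (Z j θ₀) * hstar θ₀ j := by
      intro l
      have h1 := integral_comp_fin P₁ (fun θ₁ => Yidx l θ₀ θ₁) (hYlmeas l)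
        (fun j => f i (Z j θ₀))
      rw [h1]
      refine Finset.sum_congr rfl fun j _ => ?_
      rw [hYlaw θ₀ l j, ENNReal.toReal_ofReal (hstar_nonneg θ₀ j)]
    have hh := hoeffding_twoside (P := P₁) hk0 hWind hWmeas (fun l θ₁ => hfbdd i _)
      (c := ∑ j, f i (Z j θ₀) * hstar θ₀ j) hWmean (t := 2 * δ) (by positivity)
    refine le_trans hh (ENNReal.ofReal_le_ofReal ?_)
    nlinarith [hexpboundk]
  -- the bootstrap bad event in the product space
  set C : Set (Θ₀ × Θ₁) := ⋃ i, {p : Θ₀ × Θ₁ | 2 * δ <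
    |(k:ℝ)⁻¹ * ∑ l, f i (Z (Yidx l p.1 p.2) p.1) - ∑ j, f i (Z j p.1) * hstar p.1 j|}
    with hCdef
  have hu : Measurable (fun q : Θ₀ × Fin m => Z q.2 q.1) :=
    measurable_from_prod_countable_left (fun j => hZmeas j)
  have hFil : ∀ (i : ι) (l : Fin k), Measurable fun p : Θ₀ × Θ₁ =>
      f i (Z (Yidx l p.1 p.2) p.1) := by
    intro i l
    have h1 : Measurable (fun p : Θ₀ × Θ₁ => ((p.1, Yidx l p.1 p.2) : Θ₀ × Fin m)) :=
      measurable_fst.prodMk (hYmeas l)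
    exact (hfmeas i).comp (hu.comp h1)
  have hHmeas : ∀ i, Measurable fun θ => ∑ j, f i (Z j θ) * hstar θ j := fun i =>
    Finset.measurable_sum univ fun j _ => ((hfmeas i).comp (hZmeas j)).mul (hstarmeas j)
  have hC_meas : MeasurableSet C := by
    rw [hCdef]
    refine MeasurableSet.iUnion fun i => measurableSet_lt measurable_const ?_
    exact (((Finset.measurable_sum univ (fun l _ => hFil i l)).const_mul ((k:ℝ)⁻¹)).sub
      ((hHmeas i).comp measurable_fst)).abs''
  have hC_bound : (P₀.prod P₁) C ≤ ENNReal.ofReal (γ / 2) := by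
    have hslice : ∀ θ₀, P₁ (Prod.mk θ₀ ⁻¹' C) ≤ ENNReal.ofReal (γ / 2) := by
      intro θ₀
      have heq : Prod.mk θ₀ ⁻¹' C = ⋃ i, {θ₁ | 2 * δ <
          |(k:ℝ)⁻¹ * ∑ l, f i (Z (Yidx l θ₀ θ₁) θ₀) - ∑ j, f i (Z j θ₀) * hstar θ₀ j|} := by
        rw [hCdef]
        ext θ₁
        simp only [Set.mem_preimage, Set.mem_iUnion, Set.mem_setOf_eq]
      rw [heq]
      calc P₁ _ ≤ ENNReal.ofReal (cardR * (2 * (γ / cardR) ^ 2)) :=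
            union_card_bound P₁ _ (by positivity) (fun i => hYbound θ₀ i)
        _ ≤ ENNReal.ofReal (γ / 2) := ENNReal.ofReal_le_ofReal hcard2
    rw [Measure.prod_apply hC_meas]
    calc ∫⁻ θ₀, P₁ (Prod.mk θ₀ ⁻¹' C) ∂P₀ ≤ ∫⁻ _θ₀, ENNReal.ofReal (γ / 2) ∂P₀ :=
          lintegral_mono hslice
      _ = ENNReal.ofReal (γ / 2) := by rw [lintegral_const, measure_univ, mul_one]
  -- the deterministic argument on the good event
  have hdet : ∀ θ₀, θ₀ ∉ Blam → θ₀ ∉ BZ → θ₀ ∉ BX → ∀ i,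
      |∑ j, f i (Z j θ₀) * hstar θ₀ j - (n:ℝ)⁻¹ * ∑ l, f i (X l θ₀)| ≤ 6 * δ := by
    intro θ₀ h1 h2 h3
    have hlam_le : ∀ i, |lam i θ₀| ≤ δ := by
      intro i
      by_contra hcon
      push_neg at hcon
      exact h1 (Set.mem_iUnion.2 ⟨i, hcon⟩)
    have hZ_lt : ∀ i, |∑ j, φ i (Z j θ₀) - (m:ℝ) * I i| < (m:ℝ) * δ := by
      intro i
      by_contra hcon
      push_neg at hcon
      exact h2 (Set.mem_iUnion.2 ⟨i, hcon⟩)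
    have hX_le : ∀ i, |(n:ℝ)⁻¹ * ∑ l, f i (X l θ₀) - I i| ≤ 2 * δ := by
      intro i
      by_contra hcon
      push_neg at hcon
      exact h3 (Set.mem_iUnion.2 ⟨i, hcon⟩)
    obtain ⟨i₀, hi₀⟩ := hf1
    have hφi₀ : ∀ x, φ i₀ x = gfun x := by
      intro x
      simp [hφdef, hi₀]
    have hIi₀ : I i₀ = 1 := by
      rw [hIdef]
      simp only [hi₀]
      simp
    have hDm : |(∑ j, gfun (Z j θ₀)) - (m:ℝ)| < (m:ℝ) * δ := by
      have hthis := hZ_lt i₀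
      have hsum : ∑ j, φ i₀ (Z j θ₀) = ∑ j, gfun (Z j θ₀) :=
        Finset.sum_congr rfl (fun j _ => hφi₀ _)
      rw [hsum, hIi₀, mul_one] at hthis
      exact hthis
    have hD2 : (m:ℝ) * (1 - δ) ≤ ∑ j, gfun (Z j θ₀) := by
      have := abs_lt.1 hDm
      nlinarith [this.1]
    have hD0 : 0 < ∑ j, gfun (Z j θ₀) := by nlinarith [hm0R]
    have hh₀nn : ∀ j, 0 ≤ gfun (Z j θ₀) / (∑ j', gfun (Z j' θ₀)) :=
      fun j => div_nonneg (hgnn _) hD0.le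
    have hh₀sum : ∑ j, gfun (Z j θ₀) / (∑ j', gfun (Z j' θ₀)) = 1 := by
      rw [← Finset.sum_div]
      exact div_self hD0.ne'
    have hval : ∀ i, |∑ j, f i (Z j θ₀) * (gfun (Z j θ₀) / (∑ j', gfun (Z j' θ₀))) -
        (n:ℝ)⁻¹ * ∑ l, f i (X l θ₀) - lam i θ₀| ≤ 5 * δ := by
      intro i
      have hSd : ∑ j, f i (Z j θ₀) * (gfun (Z j θ₀) / (∑ j', gfun (Z j' θ₀))) =
          (∑ j, φ i (Z j θ₀)) / (∑ j', gfun (Z j' θ₀)) := by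
        rw [Finset.sum_div]
        refine Finset.sum_congr rfl fun j _ => ?_
        rw [hφdef]
        rw [mul_div_assoc]
      have hSabs : |∑ j, φ i (Z j θ₀)| ≤ ∑ j, gfun (Z j θ₀) := by
        calc |∑ j, φ i (Z j θ₀)| ≤ ∑ j, |φ i (Z j θ₀)| := Finset.abs_sum_le_sum_abs _ _
          _ ≤ ∑ j, gfun (Z j θ₀) := Finset.sum_le_sum fun j _ => hφabs i _
      have hSI := hZ_lt i
      have hkey : |(∑ j, φ i (Z j θ₀)) / (∑ j', gfun (Z j' θ₀)) - I i| ≤ 2 * δ := by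
        have hmd : |(m:ℝ) - ∑ j, gfun (Z j θ₀)| ≤ (m:ℝ) * δ := by
          rw [abs_sub_comm]
          exact le_of_lt hDm
        have ht1 : |(∑ j, φ i (Z j θ₀)) / (∑ j', gfun (Z j' θ₀)) -
            (∑ j, φ i (Z j θ₀)) / (m:ℝ)| ≤ δ := by
          have he : (∑ j, φ i (Z j θ₀)) / (∑ j', gfun (Z j' θ₀)) -
              (∑ j, φ i (Z j θ₀)) / (m:ℝ) =
              (∑ j, φ i (Z j θ₀)) * ((m:ℝ) - ∑ j', gfun (Z j' θ₀)) /
                ((∑ j', gfun (Z j' θ₀)) * (m:ℝ)) := by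
            field_simp
          rw [he, abs_div, abs_mul, abs_of_pos (mul_pos hD0 hm0R)]
          rw [div_le_iff₀ (mul_pos hD0 hm0R)]
          calc |∑ j, φ i (Z j θ₀)| * |(m:ℝ) - ∑ j', gfun (Z j' θ₀)| ≤
              (∑ j, gfun (Z j θ₀)) * ((m:ℝ) * δ) := by
                apply mul_le_mul hSabs hmd (abs_nonneg _) (le_of_lt hD0)
            _ = δ * ((∑ j', gfun (Z j' θ₀)) * (m:ℝ)) := by ring
        have ht2 : |(∑ j, φ i (Z j θ₀)) / (m:ℝ) - I i| ≤ δ := by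
          have he : (∑ j, φ i (Z j θ₀)) / (m:ℝ) - I i =
              ((∑ j, φ i (Z j θ₀)) - (m:ℝ) * I i) / (m:ℝ) := by
            field_simp
          rw [he, abs_div, abs_of_pos hm0R, div_le_iff₀ hm0R]
          calc |(∑ j, φ i (Z j θ₀)) - (m:ℝ) * I i| ≤ (m:ℝ) * δ := le_of_lt hSI
            _ = δ * (m:ℝ) := mul_comm _ _
        calc |(∑ j, φ i (Z j θ₀)) / (∑ j', gfun (Z j' θ₀)) - I i| ≤
            |(∑ j, φ i (Z j θ₀)) / (∑ j', gfun (Z j' θ₀)) - (∑ j, φ i (Z j θ₀)) / (m:ℝ)| +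
              |(∑ j, φ i (Z j θ₀)) / (m:ℝ) - I i| := abs_sub_le _ _ _
          _ ≤ δ + δ := add_le_add ht1 ht2
          _ = 2 * δ := by ring
      rw [hSd]
      have htr : (∑ j, φ i (Z j θ₀)) / (∑ j', gfun (Z j' θ₀)) -
          (n:ℝ)⁻¹ * ∑ l, f i (X l θ₀) - lam i θ₀ =
          ((∑ j, φ i (Z j θ₀)) / (∑ j', gfun (Z j' θ₀)) - I i) +
            (I i - (n:ℝ)⁻¹ * ∑ l, f i (X l θ₀)) + (-(lam i θ₀)) := by ring
      rw [htr]
      calc |((∑ j, φ i (Z j θ₀)) / (∑ j', gfun (Z j' θ₀)) - I i) +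
            (I i - (n:ℝ)⁻¹ * ∑ l, f i (X l θ₀)) + (-(lam i θ₀))|
          ≤ |((∑ j, φ i (Z j θ₀)) / (∑ j', gfun (Z j' θ₀)) - I i) +
            (I i - (n:ℝ)⁻¹ * ∑ l, f i (X l θ₀))| + |(-(lam i θ₀))| := abs_add_le _ _
        _ ≤ (|(∑ j, φ i (Z j θ₀)) / (∑ j', gfun (Z j' θ₀)) - I i| +
            |I i - (n:ℝ)⁻¹ * ∑ l, f i (X l θ₀)|) + |lam i θ₀| := by
            rw [abs_neg]
            exact add_le_add_left (abs_add_le _ _) _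
        _ ≤ (2 * δ + 2 * δ) + δ := by
            refine add_le_add (add_le_add hkey ?_) (hlam_le i)
            rw [abs_sub_comm]
            exact hX_le i
        _ = 5 * δ := by ring
    have hsup := hstar_min θ₀ (fun j => gfun (Z j θ₀) / (∑ j', gfun (Z j' θ₀))) hh₀nn hh₀sum
    have hsup5 : (univ.sup' univ_nonempty fun i =>
        |∑ j, f i (Z j θ₀) * hstar θ₀ j - (n:ℝ)⁻¹ * ∑ l, f i (X l θ₀) - lam i θ₀|) ≤ 5 * δ :=
      le_trans hsup (Finset.sup'_le _ _ fun i _ => hval i)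
    intro i
    have hle := Finset.le_sup' (f := fun i =>
      |∑ j, f i (Z j θ₀) * hstar θ₀ j - (n:ℝ)⁻¹ * ∑ l, f i (X l θ₀) - lam i θ₀|)
      (Finset.mem_univ i)
    have h5 : |∑ j, f i (Z j θ₀) * hstar θ₀ j - (n:ℝ)⁻¹ * ∑ l, f i (X l θ₀) - lam i θ₀| ≤
        5 * δ := le_trans hle hsup5
    have htr2 : ∑ j, f i (Z j θ₀) * hstar θ₀ j - (n:ℝ)⁻¹ * ∑ l, f i (X l θ₀) =
        (∑ j, f i (Z j θ₀) * hstar θ₀ j - (n:ℝ)⁻¹ * ∑ l, f i (X l θ₀) - lam i θ₀) +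
          lam i θ₀ := by ring
    rw [htr2]
    calc |(∑ j, f i (Z j θ₀) * hstar θ₀ j - (n:ℝ)⁻¹ * ∑ l, f i (X l θ₀) - lam i θ₀) +
          lam i θ₀| ≤ |∑ j, f i (Z j θ₀) * hstar θ₀ j - (n:ℝ)⁻¹ * ∑ l, f i (X l θ₀) -
          lam i θ₀| + |lam i θ₀| := abs_add_le _ _
      _ ≤ 5 * δ + δ := add_le_add h5 (hlam_le i)
      _ = 6 * δ := by ring
  -- final assembly
  set B₀ : Set Θ₀ := Blam ∪ BZ ∪ BX with hB₀def
  have hB₀bound : P₀ B₀ ≤ ENNReal.ofReal (γ + γ + γ / 2) := by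
    calc P₀ B₀ ≤ P₀ (Blam ∪ BZ) + P₀ BX := measure_union_le _ _
      _ ≤ (P₀ Blam + P₀ BZ) + P₀ BX := add_le_add_left (measure_union_le _ _) _
      _ ≤ (ENNReal.ofReal γ + ENNReal.ofReal γ) + ENNReal.ofReal (γ / 2) :=
          add_le_add (add_le_add hBlam_bound hBZ_bound) hBX_bound
      _ = ENNReal.ofReal (γ + γ + γ / 2) := by
          rw [← ENNReal.ofReal_add hγ0.le hγ0.le, ← ENNReal.ofReal_add (by positivity)
            (by positivity)]
  set Egood : Set (Θ₀ × Θ₁) := {p | ∀ i,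
      |(k : ℝ)⁻¹ * ∑ l, f i (Z (Yidx l p.1 p.2) p.1) -
        (n : ℝ)⁻¹ * ∑ j, f i (X j p.1)| ≤ 8 * δ} with hEdef
  have hEmeas : MeasurableSet Egood := by
    rw [hEdef]
    have heq : {p : Θ₀ × Θ₁ | ∀ i,
        |(k : ℝ)⁻¹ * ∑ l, f i (Z (Yidx l p.1 p.2) p.1) -
          (n : ℝ)⁻¹ * ∑ j, f i (X j p.1)| ≤ 8 * δ} = ⋂ i, {p : Θ₀ × Θ₁ |
        |(k : ℝ)⁻¹ * ∑ l, f i (Z (Yidx l p.1 p.2) p.1) -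
          (n : ℝ)⁻¹ * ∑ j, f i (X j p.1)| ≤ 8 * δ} := by
      ext p
      simp only [Set.mem_setOf_eq, Set.mem_iInter]
    rw [heq]
    refine MeasurableSet.iInter fun i => measurableSet_le ?_ measurable_const
    exact (((Finset.measurable_sum univ (fun l _ => hFil i l)).const_mul ((k:ℝ)⁻¹)).sub
      ((Finset.measurable_sum univ fun j _ => (hfmeas i).comp
        ((hXmeas j).comp measurable_fst)).const_mul ((n:ℝ)⁻¹))).abs''
  have hsub : Egoodᶜ ⊆ (B₀ ×ˢ (Set.univ : Set Θ₁)) ∪ C := by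
    intro p hp
    by_contra hcon
    simp only [Set.mem_union, not_or] at hcon
    obtain ⟨hc1, hc2⟩ := hcon
    apply hp
    have hB : p.1 ∉ B₀ := fun hB => hc1 (Set.mem_prod.2 ⟨hB, Set.mem_univ _⟩)
    have hBlam' : p.1 ∉ Blam := fun h => hB (Or.inl (Or.inl h))
    have hBZ' : p.1 ∉ BZ := fun h => hB (Or.inl (Or.inr h))
    have hBX' : p.1 ∉ BX := fun h => hB (Or.inr h)
    intro i
    have hdet' := hdet p.1 hBlam' hBZ' hBX' i
    have hCnot : ¬(2 * δ < |(k:ℝ)⁻¹ * ∑ l, f i (Z (Yidx l p.1 p.2) p.1) -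
        ∑ j, f i (Z j p.1) * hstar p.1 j|) := fun h => hc2 (Set.mem_iUnion.2 ⟨i, h⟩)
    push_neg at hCnot
    have habc := abs_sub_le ((k:ℝ)⁻¹ * ∑ l, f i (Z (Yidx l p.1 p.2) p.1))
      (∑ j, f i (Z j p.1) * hstar p.1 j) ((n:ℝ)⁻¹ * ∑ j, f i (X j p.1))
    have hdet'' : |∑ j, f i (Z j p.1) * hstar p.1 j -
        (n:ℝ)⁻¹ * ∑ j, f i (X j p.1)| ≤ 6 * δ := hdet'
    linarith [habc, hCnot, hdet'']
  have hcompl : (P₀.prod P₁) Egoodᶜ ≤ ENNReal.ofReal (3 * γ) := by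
    calc (P₀.prod P₁) Egoodᶜ ≤ (P₀.prod P₁) ((B₀ ×ˢ (Set.univ : Set Θ₁)) ∪ C) :=
          measure_mono hsub
      _ ≤ (P₀.prod P₁) (B₀ ×ˢ (Set.univ : Set Θ₁)) + (P₀.prod P₁) C := measure_union_le _ _
      _ ≤ ENNReal.ofReal (γ + γ + γ / 2) + ENNReal.ofReal (γ / 2) := by
          refine add_le_add ?_ hC_bound
          rw [Measure.prod_prod, measure_univ, mul_one]
          exact hB₀bound
      _ = ENNReal.ofReal (3 * γ) := by
          rw [← ENNReal.ofReal_add (by positivity) (by positivity)]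
          congr 1
          ring
  have hEc : (P₀.prod P₁) Egood = 1 - (P₀.prod P₁) Egoodᶜ := by
    rw [measure_compl hEmeas (measure_ne_top _ _), measure_univ,
      ENNReal.sub_sub_cancel ENNReal.one_ne_top prob_le_one]
  have h3γ : ((P₀.prod P₁) Egoodᶜ).toReal ≤ 3 * γ :=
    ENNReal.toReal_le_of_le_ofReal (by positivity) hcompl
  have h1' : 1 - 3 * γ ≤ ((P₀.prod P₁) Egood).toReal := by
    rw [hEc, ENNReal.toReal_sub_of_le prob_le_one ENNReal.one_ne_top, ENNReal.toReal_one]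
    linarith
  linarith
end
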